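/- Let A, B, C be positive integers with B² = 4AC (discriminant D = 0), and let q(m,n) = A·m² + B·m·n + C·n². Then the series whose terms are 1/(q(x)·q(y)·q(x+y)), summed over all pairs (x,y) ∈ S, converges and its sum equals (1/24)·( B/(A·C) )³. (This is the paper's Theorem 7, formula (top5), for the topograph of q rooted at the standard-basis edge, with r₀ = A, t₀ = C, e₀ = B.) -/

import Mathlib

/-- The binary quadratic form `q(m,n) = A m² + B m n + C n²`, with real values. -/
noncomputable def q (A B C : ℤ) (v : ℤ × ℤ) : ℝ :=
  (A : ℝ) * (v.1 : ℝ) ^ 2 + (B : ℝ) * (v.1 : ℝ) * (v.2 : ℝ) + (C : ℝ) * (v.2 : ℝ) ^ 2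

/-- Pairs of lattice vectors with nonnegative coordinates and determinant one. -/
def S : Set ((ℤ × ℤ) × (ℤ × ℤ)) :=
  {p | 0 ≤ p.1.1 ∧ 0 ≤ p.1.2 ∧ 0 ≤ p.2.1 ∧ 0 ≤ p.2.2 ∧
    p.1.1 * p.2.2 - p.1.2 * p.2.1 = 1}

namespace Stmt4Aux

def step : Bool → (ℤ × ℤ) × (ℤ × ℤ) → (ℤ × ℤ) × (ℤ × ℤ)
  | true, p => (p.1 + p.2, p.2)
  | false, p => (p.1, p.1 + p.2)

def node : List Bool → (ℤ × ℤ) × (ℤ × ℤ)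
  | [] => ((1, 0), (0, 1))
  | b :: w => step b (node w)

lemma step_mem {p} (b : Bool) (hp : p ∈ S) : step b p ∈ S := by
  obtain ⟨h1, h2, h3, h4, h5⟩ := hp
  cases b
  · refine ⟨h1, h2, ?_, ?_, ?_⟩ <;>
      simp only [step, Prod.fst_add, Prod.snd_add]
    · omega
    · omega
    · linear_combination h5
  · refine ⟨?_, ?_, h3, h4, ?_⟩ <;>
      simp only [step, Prod.fst_add, Prod.snd_add]
    · omega
    · omega
    · linear_combination h5

lemma node_mem (w : List Bool) : node w ∈ S := by
  induction w with
  | nil => refine ⟨?_, ?_, ?_, ?_, ?_⟩ <;> norm_num [node, S]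
  | cons b t ih => exact step_mem b ih

lemma node_inj : Function.Injective node := by
  intro w1 w2 h
  induction w1 generalizing w2 with
  | nil =>
    cases w2 with
    | nil => rfl
    | cons b t =>
      exfalso
      obtain ⟨h1, h2, h3, h4, h5⟩ := node_mem t
      cases b <;>
        simp only [node, step] at h <;>
        rw [Prod.ext_iff, Prod.ext_iff, Prod.ext_iff] at h <;>
        simp only [Prod.fst_add, Prod.snd_add] at h <;>
        obtain ⟨⟨e1, e2⟩, e3, e4⟩ := h
      · have hx1 : (node t).1.1 = 0 := by omega
        have hx2 : (node t).1.2 = 0 := by omega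
        rw [hx1, hx2] at h5; simp at h5
      · have hy1 : (node t).2.1 = 0 := by omega
        have hy2 : (node t).2.2 = 0 := by omega
        rw [hy1, hy2] at h5; simp at h5
  | cons b t ih =>
    cases w2 with
    | nil =>
      exfalso
      obtain ⟨h1, h2, h3, h4, h5⟩ := node_mem t
      cases b <;>
        simp only [node, step] at h <;>
        rw [Prod.ext_iff, Prod.ext_iff, Prod.ext_iff] at h <;>
        simp only [Prod.fst_add, Prod.snd_add] at h <;>
        obtain ⟨⟨e1, e2⟩, e3, e4⟩ := h
      · have hx1 : (node t).1.1 = 0 := by omega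
        have hx2 : (node t).1.2 = 0 := by omega
        rw [hx1, hx2] at h5; simp at h5
      · have hy1 : (node t).2.1 = 0 := by omega
        have hy2 : (node t).2.2 = 0 := by omega
        rw [hy1, hy2] at h5; simp at h5
    | cons b' t' =>
      obtain ⟨h1, h2, h3, h4, h5⟩ := node_mem t
      obtain ⟨g1, g2, g3, g4, g5⟩ := node_mem t'
      have key : b = b' ∧ node t = node t' := by
        cases b <;> cases b' <;>
          simp only [node, step] at h <;>
          rw [Prod.ext_iff, Prod.ext_iff, Prod.ext_iff] at h <;>
          simp only [Prod.fst_add, Prod.snd_add] at h <;>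
          obtain ⟨⟨e1, e2⟩, e3, e4⟩ := h
        · exact ⟨rfl, by rw [Prod.ext_iff, Prod.ext_iff, Prod.ext_iff]; omega⟩
        · -- b = false, b' = true : (t.1, t.1+t.2) = (t'.1+t'.2, t'.2)
          exfalso
          have hx1 : (node t').1.1 = 0 := by omega
          have hx2 : (node t').1.2 = 0 := by omega
          rw [hx1, hx2] at g5; simp at g5
        · -- b = true, b' = false : (t.1+t.2, t.2) = (t'.1, t'.1+t'.2)
          exfalso
          have hx1 : (node t).1.1 = 0 := by omega
          have hx2 : (node t).1.2 = 0 := by omega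
          rw [hx1, hx2] at h5; simp at h5
        · exact ⟨rfl, by rw [Prod.ext_iff, Prod.ext_iff, Prod.ext_iff]; omega⟩
      rw [key.1, ih key.2]

lemma tri (x1 x2 y1 y2 : ℤ) (h1 : 0 ≤ x1) (h2 : 0 ≤ x2) (h3 : 0 ≤ y1) (h4 : 0 ≤ y2)
    (hdet : x1 * y2 - x2 * y1 = 1) :
    (x1 = 1 ∧ x2 = 0 ∧ y1 = 0 ∧ y2 = 1) ∨ (x1 ≤ y1 ∧ x2 ≤ y2) ∨ (y1 ≤ x1 ∧ y2 ≤ x2) := by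
  rcases le_or_gt x1 y1 with hA | hA
  · rcases le_or_gt x2 y2 with hB | hB
    · exact Or.inr (Or.inl ⟨hA, hB⟩)
    · exfalso; nlinarith
  · rcases le_or_gt y2 x2 with hB | hB
    · exact Or.inr (Or.inr ⟨le_of_lt hA, hB⟩)
    · left
      have k1 : (y1 + 1) * (x2 + 1) ≤ x1 * y2 := by nlinarith
      have k2 : y1 + x2 ≤ 0 := by nlinarith
      have hy1 : y1 = 0 := by omega
      have hx2 : x2 = 0 := by omega
      subst hy1; subst hx2
      simp only [mul_zero, zero_mul, sub_zero] at hdet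
      have hx1ge : 1 ≤ x1 := by omega
      have hy2ge : 1 ≤ y2 := by omega
      have hx1le : x1 ≤ 1 := by nlinarith
      have hy2le : y2 ≤ 1 := by nlinarith
      exact ⟨by omega, rfl, rfl, by omega⟩

lemma node_surj_aux : ∀ n : ℕ, ∀ p ∈ S, p.1.1 + p.1.2 + p.2.1 + p.2.2 ≤ (n : ℤ) →
    ∃ w, node w = p := by
  intro n
  induction n with
  | zero =>
    intro p hp hle
    obtain ⟨h1, h2, h3, h4, h5⟩ := hp
    exfalso
    have hx1 : p.1.1 = 0 := by omega
    have hx2 : p.1.2 = 0 := by omega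
    rw [hx1, hx2] at h5; simp at h5
  | succ n ih =>
    intro p hp hle
    obtain ⟨h1, h2, h3, h4, h5⟩ := hp
    rcases tri p.1.1 p.1.2 p.2.1 p.2.2 h1 h2 h3 h4 h5 with hroot | ⟨hA1, hA2⟩ | ⟨hB1, hB2⟩
    · refine ⟨[], ?_⟩
      obtain ⟨e1, e2, e3, e4⟩ := hroot
      simp only [node]
      rw [Prod.ext_iff, Prod.ext_iff, Prod.ext_iff]
      exact ⟨⟨e1.symm, e2.symm⟩, e3.symm, e4.symm⟩
    · have hxpos : 1 ≤ p.1.1 + p.1.2 := by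
        by_contra hcon
        have hx1 : p.1.1 = 0 := by omega
        have hx2 : p.1.2 = 0 := by omega
        rw [hx1, hx2] at h5; simp at h5
      have hqS : ((p.1, p.2 - p.1) : (ℤ × ℤ) × (ℤ × ℤ)) ∈ S := by
        refine ⟨h1, h2, ?_, ?_, ?_⟩ <;> simp only [Prod.fst_sub, Prod.snd_sub]
        · omega
        · omega
        · linear_combination h5
      obtain ⟨w, hw⟩ := ih _ hqS (by
        show p.1.1 + p.1.2 + (p.2 - p.1).1 + (p.2 - p.1).2 ≤ (n : ℤ)
        simp only [Prod.fst_sub, Prod.snd_sub]; omega)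
      refine ⟨false :: w, ?_⟩
      simp only [node, hw, step]
      simp only [Prod.ext_iff, Prod.fst_add, Prod.snd_add, Prod.fst_sub, Prod.snd_sub, Prod.fst,
        Prod.snd]
      constructor
      · constructor <;> omega
      · constructor <;> omega
    · have hypos : 1 ≤ p.2.1 + p.2.2 := by
        by_contra hcon
        have hy1 : p.2.1 = 0 := by omega
        have hy2 : p.2.2 = 0 := by omega
        rw [hy1, hy2] at h5; simp at h5
      have hqS : ((p.1 - p.2, p.2) : (ℤ × ℤ) × (ℤ × ℤ)) ∈ S := by
        refine ⟨?_, ?_, h3, h4, ?_⟩ <;> simp only [Prod.fst_sub, Prod.snd_sub]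
        · omega
        · omega
        · linear_combination h5
      obtain ⟨w, hw⟩ := ih _ hqS (by
        show (p.1 - p.2).1 + (p.1 - p.2).2 + p.2.1 + p.2.2 ≤ (n : ℤ)
        simp only [Prod.fst_sub, Prod.snd_sub]; omega)
      refine ⟨true :: w, ?_⟩
      simp only [node, hw, step]
      simp only [Prod.ext_iff, Prod.fst_add, Prod.snd_add, Prod.fst_sub, Prod.snd_sub, Prod.fst,
        Prod.snd]
      constructor
      · constructor <;> omega
      · constructor <;> omega

lemma node_surj (p : (ℤ × ℤ) × (ℤ × ℤ)) (hp : p ∈ S) : ∃ w, node w = p := by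
  obtain ⟨h1, h2, h3, h4, h5⟩ := hp
  exact node_surj_aux (p.1.1 + p.1.2 + p.2.1 + p.2.2).toNat p ⟨h1, h2, h3, h4, h5⟩ (by omega)



/-! ### Linear form along the tree -/

def lin (a c : ℝ) (v : ℤ × ℤ) : ℝ := a * v.1 + c * v.2

lemma lin_add (a c : ℝ) (x y : ℤ × ℤ) : lin a c (x + y) = lin a c x + lin a c y := by
  simp only [lin, Prod.fst_add, Prod.snd_add]
  push_cast
  ring

noncomputable def U (a c : ℝ) (w : List Bool) : ℝ := lin a c (node w).1
noncomputable def V (a c : ℝ) (w : List Bool) : ℝ := lin a c (node w).2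

variable (a c : ℝ)

lemma U_nil : U a c [] = a := by simp [U, lin, node]
lemma V_nil : V a c [] = c := by simp [V, lin, node]
lemma U_false (w : List Bool) : U a c (false :: w) = U a c w := rfl
lemma V_false (w : List Bool) : V a c (false :: w) = U a c w + V a c w := lin_add a c _ _
lemma U_true (w : List Bool) : U a c (true :: w) = U a c w + V a c w := lin_add a c _ _
lemma V_true (w : List Bool) : V a c (true :: w) = V a c w := rfl

lemma UV_bounds (ha : 0 < a) (hc : 0 < c) : ∀ w : List Bool,
    min a c ≤ U a c w ∧ min a c ≤ V a c w ∧
      a + c + w.length * min a c ≤ U a c w + V a c w := by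
  have hm : 0 < min a c := lt_min ha hc
  intro w
  induction w with
  | nil =>
    rw [U_nil, V_nil]
    exact ⟨min_le_left a c, min_le_right a c, by simp⟩
  | cons b t ih =>
    obtain ⟨ih1, ih2, ih3⟩ := ih
    cases b
    · rw [U_false, V_false]
      refine ⟨ih1, by linarith, ?_⟩
      simp only [List.length_cons]
      push_cast
      linarith
    · rw [U_true, V_true]
      refine ⟨by linarith, ih2, ?_⟩
      simp only [List.length_cons]
      push_cast
      linarith

lemma U_pos (ha : 0 < a) (hc : 0 < c) (w : List Bool) : 0 < U a c w :=
  lt_of_lt_of_le (lt_min ha hc) (UV_bounds a c ha hc w).1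

lemma V_pos (ha : 0 < a) (hc : 0 < c) (w : List Bool) : 0 < V a c w :=
  lt_of_lt_of_le (lt_min ha hc) (UV_bounds a c ha hc w).2.1

/-! ### Finsets of words of fixed / bounded length -/

def Wn : ℕ → Finset (List Bool)
  | 0 => {([] : List Bool)}
  | n + 1 => (Wn n).biUnion (fun w => {false :: w, true :: w})

lemma mem_Wn : ∀ {n : ℕ} {w : List Bool}, w ∈ Wn n ↔ w.length = n := by
  intro n
  induction n with
  | zero => intro w; simp [Wn, List.length_eq_zero_iff]
  | succ n ih =>
    intro w
    simp only [Wn, Finset.mem_biUnion, Finset.mem_insert, Finset.mem_singleton]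
    constructor
    · rintro ⟨t, ht, rfl | rfl⟩ <;> simp [ih.mp ht]
    · intro hw
      cases w with
      | nil => simp at hw
      | cons b t =>
        refine ⟨t, ih.mpr (by simpa using hw), ?_⟩
        cases b
        · exact Or.inl rfl
        · exact Or.inr rfl

lemma sum_Wn_succ (g : List Bool → ℝ) (n : ℕ) :
    ∑ w ∈ Wn (n + 1), g w = ∑ w ∈ Wn n, (g (false :: w) + g (true :: w)) := by
  rw [show Wn (n+1) = (Wn n).biUnion (fun w => {false :: w, true :: w}) from rfl,
    Finset.sum_biUnion]
  · refine Finset.sum_congr rfl fun w _ => ?_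
    rw [Finset.sum_pair (by simp)]
  · intro x hx y hy hxy
    simp only [Function.onFun, Finset.disjoint_left, Finset.mem_insert, Finset.mem_singleton]
    rintro z (rfl | rfl) <;> rintro (h | h) <;> simp_all

def Vd : ℕ → Finset (List Bool)
  | 0 => ∅
  | n + 1 => Vd n ∪ Wn n

lemma mem_Vd : ∀ {n : ℕ} {w : List Bool}, w ∈ Vd n ↔ w.length < n := by
  intro n
  induction n with
  | zero => intro w; simp [Vd]
  | succ n ih =>
    intro w
    simp only [Vd, Finset.mem_union, ih, mem_Wn]
    omega

/-! ### The telescoping quantities -/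

noncomputable def Fq (a c : ℝ) (w : List Bool) : ℝ := 1 / (3 * U a c w ^ 3 * V a c w ^ 3)
noncomputable def Gq (a c : ℝ) (w : List Bool) : ℝ := 1 / (U a c w * V a c w)
noncomputable def term (a c : ℝ) (w : List Bool) : ℝ :=
  1 / (U a c w ^ 2 * V a c w ^ 2 * (U a c w + V a c w) ^ 2)

lemma term_eq (ha : 0 < a) (hc : 0 < c) (w : List Bool) :
    term a c w = Fq a c w - Fq a c (false :: w) - Fq a c (true :: w) := by
  have hu := U_pos a c ha hc w
  have hv := V_pos a c ha hc w
  rw [term, Fq, Fq, Fq, U_false, V_false, U_true, V_true]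
  have huv : (0:ℝ) < U a c w + V a c w := by linarith
  field_simp
  ring

lemma Gq_split (ha : 0 < a) (hc : 0 < c) (w : List Bool) :
    Gq a c w = Gq a c (false :: w) + Gq a c (true :: w) := by
  have hu := U_pos a c ha hc w
  have hv := V_pos a c ha hc w
  rw [Gq, Gq, Gq, U_false, V_false, U_true, V_true]
  have huv : (0:ℝ) < U a c w + V a c w := by linarith
  field_simp
  ring

lemma sum_Gq (ha : 0 < a) (hc : 0 < c) (n : ℕ) :
    ∑ w ∈ Wn n, Gq a c w = 1 / (a * c) := by
  induction n with
  | zero => simp [Wn, Gq, U_nil, V_nil]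
  | succ n ih =>
    rw [sum_Wn_succ]
    rw [← ih]
    exact Finset.sum_congr rfl fun w _ => (Gq_split a c ha hc w).symm

lemma sum_term (ha : 0 < a) (hc : 0 < c) (n : ℕ) :
    ∑ w ∈ Vd n, term a c w = Fq a c [] - ∑ w ∈ Wn n, Fq a c w := by
  induction n with
  | zero => simp [Vd, Wn]
  | succ n ih =>
    have hdisj : Disjoint (Vd n) (Wn n) := by
      rw [Finset.disjoint_left]
      intro w hw hw'
      rw [mem_Vd] at hw
      rw [mem_Wn] at hw'
      omega
    rw [show Vd (n+1) = Vd n ∪ Wn n from rfl, Finset.sum_union hdisj, ih]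
    have h1 : ∑ w ∈ Wn n, term a c w
        = ∑ w ∈ Wn n, Fq a c w - ∑ w ∈ Wn (n+1), Fq a c w := by
      rw [sum_Wn_succ (Fq a c) n, ← Finset.sum_sub_distrib]
      exact Finset.sum_congr rfl fun w _ => by
        rw [term_eq a c ha hc w]; ring
    rw [h1]
    ring

/-! ### Bounds -/

lemma Gq_bound (ha : 0 < a) (hc : 0 < c) {n : ℕ} {w : List Bool} (hw : w ∈ Wn n) :
    Gq a c w ≤ 2 / (min a c ^ 2 * (n + 2)) := by
  have hm : 0 < min a c := lt_min ha hc
  obtain ⟨h1, h2, h3⟩ := UV_bounds a c ha hc w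
  rw [mem_Wn] at hw
  rw [hw] at h3
  have hu := U_pos a c ha hc w
  have hv := V_pos a c ha hc w
  have hac : a + c ≥ 2 * min a c := by
    rcases min_cases a c with ⟨hm1, _⟩ | ⟨hm1, _⟩ <;> rw [hm1] <;> [linarith [min_le_right a c]; linarith [min_le_left a c]]
  have hsum : (n + 2 : ℝ) * min a c ≤ U a c w + V a c w := by
    have : (n : ℝ) * min a c + 2 * min a c ≤ a + c + n * min a c := by linarith
    nlinarith
  have hprod : min a c ^ 2 * (n + 2) / 2 ≤ U a c w * V a c w := by
    have k1 : min a c * V a c w ≤ U a c w * V a c w := by nlinarith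
    have k2 : min a c * U a c w ≤ U a c w * V a c w := by nlinarith
    nlinarith
  have hpos : (0:ℝ) < min a c ^ 2 * (n + 2) / 2 := by positivity
  rw [Gq]
  calc 1 / (U a c w * V a c w) ≤ 1 / (min a c ^ 2 * (n + 2) / 2) :=
        one_div_le_one_div_of_le hpos hprod
    _ = 2 / (min a c ^ 2 * (n + 2)) := by
        rw [one_div_div]

lemma Fq_nonneg (ha : 0 < a) (hc : 0 < c) (w : List Bool) : 0 ≤ Fq a c w := by
  have hu := U_pos a c ha hc w
  have hv := V_pos a c ha hc w
  rw [Fq]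
  positivity

lemma term_nonneg (ha : 0 < a) (hc : 0 < c) (w : List Bool) : 0 ≤ term a c w := by
  have hu := U_pos a c ha hc w
  have hv := V_pos a c ha hc w
  rw [term]
  positivity

lemma sum_Fq_bound (ha : 0 < a) (hc : 0 < c) (n : ℕ) :
    ∑ w ∈ Wn n, Fq a c w ≤ (4 / (3 * min a c ^ 4 * (a * c))) * (1 / (n + 1)) := by
  have hm : 0 < min a c := lt_min ha hc
  have key : ∀ w ∈ Wn n, Fq a c w ≤ (1/3) * (2 / (min a c ^ 2 * (n + 2))) ^ 2 * Gq a c w := by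
    intro w hw
    have hu := U_pos a c ha hc w
    have hv := V_pos a c ha hc w
    have hG : Gq a c w ≤ 2 / (min a c ^ 2 * (n + 2)) := Gq_bound a c ha hc hw
    have hGpos : 0 < Gq a c w := by rw [Gq]; positivity
    have hF : Fq a c w = (1/3) * Gq a c w ^ 3 := by
      rw [Fq, Gq]
      field_simp
    rw [hF]
    have : Gq a c w ^ 3 = Gq a c w ^ 2 * Gq a c w := by ring
    rw [this]
    have h2 : Gq a c w ^ 2 ≤ (2 / (min a c ^ 2 * (n + 2))) ^ 2 := by
      apply sq_le_sq' <;> nlinarith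
    nlinarith
  calc ∑ w ∈ Wn n, Fq a c w
      ≤ ∑ w ∈ Wn n, (1/3) * (2 / (min a c ^ 2 * (n + 2))) ^ 2 * Gq a c w :=
        Finset.sum_le_sum key
    _ = (1/3) * (2 / (min a c ^ 2 * (n + 2))) ^ 2 * (1 / (a * c)) := by
        rw [← Finset.mul_sum, sum_Gq a c ha hc]
    _ = (4 / (3 * min a c ^ 4 * (a * c))) * (1 / (((n:ℝ) + 2) ^ 2)) := by
        have hn2 : (0:ℝ) < (n:ℝ) + 2 := by positivity
        field_simp
        ring
    _ ≤ (4 / (3 * min a c ^ 4 * (a * c))) * (1 / (n + 1)) := by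
        have hn2 : (0:ℝ) < (n:ℝ) + 2 := by positivity
        have hkey : ((n:ℝ) + 1) ≤ ((n:ℝ) + 2) ^ 2 := by nlinarith [sq_nonneg ((n:ℝ))]
        have h1 : 1 / (((n:ℝ) + 2) ^ 2) ≤ 1 / ((n:ℝ) + 1) :=
          one_div_le_one_div_of_le (by positivity) hkey
        apply mul_le_mul_of_nonneg_left h1
        positivity

lemma tendsto_sum_Fq (ha : 0 < a) (hc : 0 < c) :
    Filter.Tendsto (fun n => ∑ w ∈ Wn n, Fq a c w) Filter.atTop (nhds 0) := by
  have hm : 0 < min a c := lt_min ha hc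
  apply squeeze_zero
  · intro n
    exact Finset.sum_nonneg fun w _ => Fq_nonneg a c ha hc w
  · intro n
    exact sum_Fq_bound a c ha hc n
  · have h2 := (tendsto_const_div_atTop_nhds_zero_nat
      (4 / (3 * min a c ^ 4 * (a * c)))).comp (Filter.tendsto_add_atTop_nat 1)
    apply h2.congr
    intro n
    simp only [Function.comp_apply]
    push_cast
    rw [mul_one_div]

lemma hasSum_term (ha : 0 < a) (hc : 0 < c) :
    HasSum (term a c) (1 / (3 * a ^ 3 * c ^ 3)) := by
  have hL : Fq a c [] = 1 / (3 * a ^ 3 * c ^ 3) := by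
    rw [Fq, U_nil, V_nil]
  rw [← hL]
  have hnonneg : ∀ w, 0 ≤ term a c w := term_nonneg a c ha hc
  have hP : Filter.Tendsto (fun n => ∑ w ∈ Vd n, term a c w) Filter.atTop
      (nhds (Fq a c [])) := by
    have : (fun n => ∑ w ∈ Vd n, term a c w)
        = fun n => Fq a c [] - ∑ w ∈ Wn n, Fq a c w := by
      funext n; exact sum_term a c ha hc n
    rw [this]
    have := Filter.Tendsto.sub (tendsto_const_nhds (x := Fq a c []) (f := Filter.atTop))
      (tendsto_sum_Fq a c ha hc)
    simpa using this
  apply hasSum_of_isLUB_of_nonneg _ hnonneg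
  constructor
  · rintro x ⟨s, rfl⟩
    have hsub : s ⊆ Vd (s.sup List.length + 1) := by
      intro w hw
      rw [mem_Vd]
      exact Nat.lt_succ_of_le (Finset.le_sup hw)
    calc ∑ w ∈ s, term a c w ≤ ∑ w ∈ Vd (s.sup List.length + 1), term a c w :=
          Finset.sum_le_sum_of_subset_of_nonneg hsub fun w _ _ => hnonneg w
      _ = Fq a c [] - ∑ w ∈ Wn (s.sup List.length + 1), Fq a c w :=
          sum_term a c ha hc _
      _ ≤ Fq a c [] := by
          have := Finset.sum_nonneg fun w (_ : w ∈ Wn (s.sup List.length + 1)) =>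
            Fq_nonneg a c ha hc w
          linarith
  · rintro b hb
    refine le_of_tendsto hP (Filter.Eventually.of_forall fun n => ?_)
    exact hb ⟨Vd n, rfl⟩

noncomputable def nodeEquiv : List Bool ≃ S :=
  Equiv.ofBijective (fun w => ⟨node w, node_mem w⟩)
    ⟨fun w1 w2 h => node_inj (congrArg Subtype.val h),
     fun p => (node_surj p.1 p.2).imp fun w hw => Subtype.ext hw⟩

theorem key (ha : 0 < a) (hc : 0 < c) :
    HasSum (fun p : S => 1 / (lin a c p.val.1 ^ 2 * lin a c p.val.2 ^ 2 *
      lin a c (p.val.1 + p.val.2) ^ 2)) (1 / (3 * a ^ 3 * c ^ 3)) := by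
  rw [← Equiv.hasSum_iff (nodeEquiv)]
  have : ((fun p : S => 1 / (lin a c p.val.1 ^ 2 * lin a c p.val.2 ^ 2 *
      lin a c (p.val.1 + p.val.2) ^ 2)) ∘ nodeEquiv) = term a c := by
    funext w
    simp only [Function.comp, nodeEquiv, Equiv.ofBijective_apply, term, U, V]
    rw [lin_add]
    rfl
  rw [this]
  exact hasSum_term a c ha hc

end Stmt4Aux

theorem stmt_4 (A B C : ℤ) (hA : 0 < A) (hB : 0 < B) (hC : 0 < C)
    (hD : B ^ 2 = 4 * A * C) :
    HasSum
      (fun p : S =>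
        1 / (q A B C p.val.1 * q A B C p.val.2 * q A B C (p.val.1 + p.val.2)))
      ((1 / 24) * ((B : ℝ) / ((A : ℝ) * (C : ℝ))) ^ 3) := by
  set a : ℝ := Real.sqrt A with ha_def
  set c : ℝ := Real.sqrt C with hc_def
  have ha : 0 < a := Real.sqrt_pos.mpr (by exact_mod_cast hA)
  have hc : 0 < c := Real.sqrt_pos.mpr (by exact_mod_cast hC)
  have hA' : (A : ℝ) = a ^ 2 := (Real.sq_sqrt (by positivity)).symm
  have hC' : (C : ℝ) = c ^ 2 := (Real.sq_sqrt (by positivity)).symm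
  have hBeq : (B : ℝ) = 2 * a * c := by
    have h2 : ((B : ℝ)) ^ 2 = (2 * a * c) ^ 2 := by
      have : ((B : ℝ)) ^ 2 = 4 * (A : ℝ) * (C : ℝ) := by exact_mod_cast hD
      rw [this, hA', hC']; ring
    have hBpos : (0 : ℝ) < (B : ℝ) := by exact_mod_cast hB
    have hfac : ((B : ℝ) - 2 * a * c) * ((B : ℝ) + 2 * a * c) = 0 := by
      ring_nf; nlinarith [h2]
    rcases mul_eq_zero.mp hfac with h | h
    · linarith
    · nlinarith
  have hq : ∀ v : ℤ × ℤ, q A B C v = Stmt4Aux.lin a c v ^ 2 := by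
    intro v
    rw [q, Stmt4Aux.lin, hA', hC', hBeq]
    ring
  have hval : (1 / 24 : ℝ) * ((B : ℝ) / ((A : ℝ) * (C : ℝ))) ^ 3 =
      1 / (3 * a ^ 3 * c ^ 3) := by
    rw [hBeq, hA', hC']
    field_simp
    ring
  rw [hval]
  have := Stmt4Aux.key a c ha hc
  convert this using 2 with p
  rw [hq, hq, hq]
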